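/- Let r ≥ 1 be an integer and u ≥ v ≥ w real numbers with v ≥ r and w ≥ r−1. If C(u,r) = C(v,r) + C(w,r−1), then C(u+1, r+1) ≥ C(v+1, r+1) + C(w+1, r). -/

import Mathlib

/-- Generalized binomial coefficient `C(x, i) = x(x−1)⋯(x−i+1)/i!` for real `x`. -/
noncomputable def binomR (x : ℝ) (i : ℕ) : ℝ :=
  (∏ j ∈ Finset.range i, (x - j)) / (Nat.factorial i)

open Finset Set

noncomputable def PP (r : ℕ) (x : ℝ) : ℝ := ∏ j ∈ Finset.range r, (x - j)

noncomputable def PPd (r : ℕ) (x : ℝ) : ℝ :=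
  ∑ k ∈ Finset.range r, ∏ j ∈ (Finset.range r).erase k, (x - j)

noncomputable def Psid (r : ℕ) (x : ℝ) : ℝ := PPd r x / Nat.factorial r

lemma hasDerivAt_PP (r : ℕ) (x : ℝ) : HasDerivAt (PP r) (PPd r x) x := by
  have h := HasDerivAt.fun_finsetProd (u := Finset.range r) (f := fun j y => y - (j : ℝ))
    (f' := fun _ => (1 : ℝ)) (x := x) (fun i _ => (hasDerivAt_id x).sub_const _)
  simp only [smul_eq_mul, mul_one] at h
  exact h
lemma sub_pos_of_mem_range {r : ℕ} {x : ℝ} (hx : (r : ℝ) - 1 < x) {j : ℕ}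
    (hj : j ∈ Finset.range r) : 0 < x - j := by
  have h : j + 1 ≤ r := Finset.mem_range.mp hj
  have : (j : ℝ) + 1 ≤ r := by exact_mod_cast h
  linarith
lemma PP_pos {r : ℕ} {x : ℝ} (hx : (r : ℝ) - 1 < x) : 0 < PP r x :=
  Finset.prod_pos fun _ hj => sub_pos_of_mem_range hx hj
lemma PPd_pos {r : ℕ} (hr : 1 ≤ r) {x : ℝ} (hx : (r : ℝ) - 1 < x) : 0 < PPd r x :=
  Finset.sum_pos (fun k _ => Finset.prod_pos fun j hj =>
    sub_pos_of_mem_range hx (Finset.mem_of_mem_erase hj)) ⟨0, Finset.mem_range.mpr hr⟩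

lemma hasDerivAt_binomR (r : ℕ) (x : ℝ) :
    HasDerivAt (fun t => binomR t r) (Psid r x) x := by
  have := (hasDerivAt_PP r x).div_const (Nat.factorial r : ℝ)
  simpa [binomR, PP, Psid] using this

lemma Psid_pos {r : ℕ} (hr : 1 ≤ r) {x : ℝ} (hx : (r : ℝ) - 1 < x) : 0 < Psid r x :=
  div_pos (PPd_pos hr hx) (by positivity)

-- ratio monotonicity at the PP level
lemma PP_ratio {r : ℕ} {x y : ℝ} (hx : (r : ℝ) - 1 < x) (hxy : x ≤ y) :
    PP r x * PPd r y ≤ PP r y * PPd r x := by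
  have hy : (r : ℝ) - 1 < y := lt_of_lt_of_le hx hxy
  unfold PPd
  rw [Finset.mul_sum, Finset.mul_sum]
  refine Finset.sum_le_sum fun k hk => ?_
  have hxk : PP r x = (x - k) * ∏ j ∈ (Finset.range r).erase k, (x - j) :=
    (Finset.mul_prod_erase _ _ hk).symm
  have hyk : PP r y = (y - k) * ∏ j ∈ (Finset.range r).erase k, (y - j) :=
    (Finset.mul_prod_erase _ _ hk).symm
  have hpx : 0 < ∏ j ∈ (Finset.range r).erase k, (x - j) :=
    Finset.prod_pos fun j hj => sub_pos_of_mem_range hx (Finset.mem_of_mem_erase hj)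
  have hpy : 0 < ∏ j ∈ (Finset.range r).erase k, (y - j) :=
    Finset.prod_pos fun j hj => sub_pos_of_mem_range hy (Finset.mem_of_mem_erase hj)
  rw [hxk, hyk]
  nlinarith [mul_pos hpx hpy]


lemma PPd_succ (r : ℕ) (x : ℝ) : PPd (r + 1) x = PPd r x * (x - r) + PP r x := by
  have h1 : HasDerivAt (PP (r + 1)) (PPd (r + 1) x) x := hasDerivAt_PP _ _
  have h2 : HasDerivAt (fun y => PP r y * (y - (r : ℝ)))
      (PPd r x * (x - (r : ℝ)) + PP r x * 1) x :=
    (hasDerivAt_PP r x).mul ((hasDerivAt_id x).sub_const _)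
  have hfun : PP (r + 1) = fun y => PP r y * (y - (r : ℝ)) := by
    funext y; simp [PP, Finset.prod_range_succ]
  rw [hfun] at h1
  have := h1.unique h2
  linarith

lemma binomR_pascal (x : ℝ) (i : ℕ) :
    binomR (x + 1) (i + 1) = binomR x (i + 1) + binomR x i := by
  have h1 : ∏ j ∈ Finset.range (i + 1), (x + 1 - j) =
      (∏ j ∈ Finset.range i, (x - j)) * (x + 1) := by
    rw [Finset.prod_range_succ']
    congr 1
    · exact Finset.prod_congr rfl fun j _ => by push_cast; ring
    · simp
  have h2 : ∏ j ∈ Finset.range (i + 1), (x - j) =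
      (∏ j ∈ Finset.range i, (x - j)) * (x - i) := Finset.prod_range_succ _ _
  have hf : (Nat.factorial (i + 1) : ℝ) = (i + 1) * Nat.factorial i := by
    push_cast [Nat.factorial_succ]; ring
  have hfi : (Nat.factorial i : ℝ) ≠ 0 := by positivity
  have hfi1 : ((i : ℝ) + 1) ≠ 0 := by positivity
  unfold binomR
  rw [h1, h2, hf]
  field_simp
  ring


lemma Psid_ratio {r : ℕ} (hr : 1 ≤ r) {x y : ℝ} (hx : (r : ℝ) - 1 < x) (hxy : x ≤ y) :
    Psid (r + 1) x * Psid r y ≤ Psid (r + 1) y * Psid r x := by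
  have hy : (r : ℝ) - 1 < y := lt_of_lt_of_le hx hxy
  have hcore : PPd (r + 1) x * PPd r y ≤ PPd (r + 1) y * PPd r x := by
    rw [PPd_succ, PPd_succ]
    have h1 := PP_ratio hx hxy
    have h2 : PPd r x * PPd r y * x ≤ PPd r x * PPd r y * y :=
      mul_le_mul_of_nonneg_left hxy (mul_pos (PPd_pos hr hx) (PPd_pos hr hy)).le
    nlinarith [h1, h2]
  unfold Psid
  rw [div_mul_div_comm, div_mul_div_comm]
  have hd : (0:ℝ) < (Nat.factorial (r+1) : ℝ) * (Nat.factorial r : ℝ) := by positivity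
  exact div_le_div_of_nonneg_right hcore hd.le


lemma binomR_strictMonoOn (r : ℕ) (hr : 1 ≤ r) :
    StrictMonoOn (fun t => binomR t r) (Ici ((r : ℝ) - 1)) := by
  apply strictMonoOn_of_deriv_pos (convex_Ici _)
  · exact fun x _ => ((hasDerivAt_binomR r x).continuousAt).continuousWithinAt
  · intro x hx
    rw [interior_Ici] at hx
    rw [(hasDerivAt_binomR r x).deriv]
    exact Psid_pos hr hx

lemma slope_adj (r : ℕ) (hr : 1 ≤ r) {a b c d : ℝ} (ha : (r : ℝ) - 1 ≤ a) (hab : a < b)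
    (hbc : b ≤ c) (hcd : c < d) :
    (binomR b (r + 1) - binomR a (r + 1)) * (binomR d r - binomR c r) ≤
      (binomR d (r + 1) - binomR c (r + 1)) * (binomR b r - binomR a r) := by
  have cont : ∀ (i : ℕ) (s : Set ℝ), ContinuousOn (fun t => binomR t i) s := fun i s =>
    fun x _ => ((hasDerivAt_binomR i x).continuousAt).continuousWithinAt
  obtain ⟨ξ₁, hξ₁, e₁⟩ := exists_ratio_hasDerivAt_eq_ratio_slope
    (fun t => binomR t (r + 1)) (Psid (r + 1)) hab (cont _ _)
    (fun x _ => hasDerivAt_binomR (r + 1) x)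
    (fun t => binomR t r) (Psid r) (cont _ _) (fun x _ => hasDerivAt_binomR r x)
  obtain ⟨ξ₂, hξ₂, e₂⟩ := exists_ratio_hasDerivAt_eq_ratio_slope
    (fun t => binomR t (r + 1)) (Psid (r + 1)) hcd (cont _ _)
    (fun x _ => hasDerivAt_binomR (r + 1) x)
    (fun t => binomR t r) (Psid r) (cont _ _) (fun x _ => hasDerivAt_binomR r x)
  have hξ₁r : (r : ℝ) - 1 < ξ₁ := lt_of_le_of_lt ha hξ₁.1
  have hξ₂r : (r : ℝ) - 1 < ξ₂ := lt_of_le_of_lt (ha.trans (hab.le.trans hbc)) hξ₂.1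
  have hξ12 : ξ₁ ≤ ξ₂ := (hξ₁.2.le.trans hbc).trans hξ₂.1.le
  have key := Psid_ratio hr hξ₁r hξ12
  have p1 := Psid_pos hr hξ₁r
  have p2 := Psid_pos hr hξ₂r
  have hmono := binomR_strictMonoOn r hr
  have sb : 0 < binomR b r - binomR a r :=
    sub_pos.mpr (hmono (mem_Ici.mpr ha) (mem_Ici.mpr (ha.trans hab.le)) hab)
  have hd' : (r : ℝ) - 1 ≤ c := ha.trans (hab.le.trans hbc)
  have sd : 0 < binomR d r - binomR c r :=
    sub_pos.mpr (hmono (mem_Ici.mpr hd') (mem_Ici.mpr (hd'.trans hcd.le)) hcd)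
  -- goal * (Psid r ξ₁ * Psid r ξ₂) comparison
  have h3 : (binomR b (r + 1) - binomR a (r + 1)) * (binomR d r - binomR c r) *
      (Psid r ξ₁ * Psid r ξ₂) =
      ((binomR b r - binomR a r) * (binomR d r - binomR c r)) *
        (Psid (r + 1) ξ₁ * Psid r ξ₂) := by
    linear_combination (-(binomR d r - binomR c r) * Psid r ξ₂) * e₁
  have h4 : (binomR d (r + 1) - binomR c (r + 1)) * (binomR b r - binomR a r) *
      (Psid r ξ₁ * Psid r ξ₂) =
      ((binomR b r - binomR a r) * (binomR d r - binomR c r)) *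
        (Psid (r + 1) ξ₂ * Psid r ξ₁) := by
    linear_combination (-(binomR b r - binomR a r) * Psid r ξ₁) * e₂
  have hmul : (binomR b (r + 1) - binomR a (r + 1)) * (binomR d r - binomR c r) *
      (Psid r ξ₁ * Psid r ξ₂) ≤
      (binomR d (r + 1) - binomR c (r + 1)) * (binomR b r - binomR a r) *
      (Psid r ξ₁ * Psid r ξ₂) := by
    rw [h3, h4]
    exact mul_le_mul_of_nonneg_left key (mul_pos sb sd).le
  exact le_of_mul_le_mul_right hmul (mul_pos p1 p2)


lemma slope_right_ext (r : ℕ) (hr : 1 ≤ r) {a b c : ℝ} (ha : (r : ℝ) - 1 ≤ a) (hab : a < b)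
    (hbc : b ≤ c) :
    (binomR b (r + 1) - binomR a (r + 1)) * (binomR c r - binomR a r) ≤
      (binomR c (r + 1) - binomR a (r + 1)) * (binomR b r - binomR a r) := by
  rcases eq_or_lt_of_le hbc with rfl | hbc'
  · exact le_rfl
  · have h := slope_adj r hr ha hab (le_refl b) hbc'
    nlinarith [h]

lemma slope_left_ext (r : ℕ) (hr : 1 ≤ r) {a b c : ℝ} (ha : (r : ℝ) - 1 ≤ a) (hab : a ≤ b)
    (hbc : b < c) :
    (binomR c (r + 1) - binomR a (r + 1)) * (binomR c r - binomR b r) ≤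
      (binomR c (r + 1) - binomR b (r + 1)) * (binomR c r - binomR a r) := by
  rcases eq_or_lt_of_le hab with rfl | hab'
  · exact le_of_eq rfl
  · have h := slope_adj r hr ha hab' (le_refl b) hbc
    nlinarith [h]

/-- If `u ≥ v ≥ w`, `v ≥ r`, `w ≥ r−1` and `C(u,r) = C(v,r) + C(w,r−1)`, then
`C(u+1, r+1) ≥ C(v+1, r+1) + C(w+1, r)`. -/
theorem binomR_ineq (r : ℕ) (hr : 1 ≤ r) (u v w : ℝ)
    (huv : v ≤ u) (hvw : w ≤ v) (hv : (r : ℝ) ≤ v) (hw : (r : ℝ) - 1 ≤ w)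
    (heq : binomR u r = binomR v r + binomR w (r - 1)) :
    binomR (v + 1) (r + 1) + binomR (w + 1) r ≤ binomR (u + 1) (r + 1) := by
  have hmono := binomR_strictMonoOn r hr
  have hw1 : (r : ℝ) - 1 ≤ w + 1 := by linarith
  have hv' : (r : ℝ) - 1 ≤ v := by linarith
  have hu' : (r : ℝ) - 1 ≤ u := by linarith
  -- Pascal identities
  have pw : binomR (w + 1) r = binomR w r + binomR w (r - 1) := by
    have := binomR_pascal w (r - 1)
    rwa [Nat.sub_add_cancel hr] at this
  have pw' : binomR (w + 1) (r + 1) = binomR w (r + 1) + binomR w r := binomR_pascal w r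
  have pu : binomR (u + 1) (r + 1) = binomR u (r + 1) + binomR u r := binomR_pascal u r
  have pv : binomR (v + 1) (r + 1) = binomR v (r + 1) + binomR v r := binomR_pascal v r
  -- heq in difference form
  have heq' : binomR u r - binomR v r = binomR (w + 1) r - binomR w r := by
    rw [pw]; linarith
  have hposw : 0 < binomR (w + 1) r - binomR w r :=
    sub_pos.mpr (hmono (mem_Ici.mpr hw) (mem_Ici.mpr hw1) (lt_add_one w))
  have hΨvw : binomR w r ≤ binomR v r := by
    rcases eq_or_lt_of_le hvw with rfl | h
    · exact le_rfl
    · exact (hmono (mem_Ici.mpr hw) (mem_Ici.mpr hv') h).le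
  have huv' : v < u := by
    rcases eq_or_lt_of_le huv with rfl | h
    · exfalso; linarith
    · exact h
  have huw1 : w + 1 ≤ u := by
    by_contra h
    push_neg at h
    have : binomR u r < binomR (w + 1) r := hmono (mem_Ici.mpr hu') (mem_Ici.mpr hw1) h
    linarith
  -- chord inequalities
  have hi : (binomR (w + 1) (r + 1) - binomR w (r + 1)) * (binomR u r - binomR w r) ≤
      (binomR u (r + 1) - binomR w (r + 1)) * (binomR (w + 1) r - binomR w r) := by
    rcases eq_or_lt_of_le huw1 with h | h
    · rw [h]
    · exact slope_right_ext r hr hw (lt_add_one w) h.le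
  have hii : (binomR u (r + 1) - binomR w (r + 1)) * (binomR u r - binomR v r) ≤
      (binomR u (r + 1) - binomR v (r + 1)) * (binomR u r - binomR w r) := by
    rcases eq_or_lt_of_le hvw with h | h
    · rw [← h]
    · exact slope_left_ext r hr hw hvw huv'
  have hposuw : 0 < binomR u r - binomR w r := by linarith
  have hchain : ((binomR (w + 1) (r + 1) - binomR w (r + 1)) * (binomR u r - binomR v r)) *
      (binomR u r - binomR w r) ≤
      ((binomR u (r + 1) - binomR v (r + 1)) * (binomR (w + 1) r - binomR w r)) *
      (binomR u r - binomR w r) := by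
    have s1 := mul_le_mul_of_nonneg_right hi (by linarith : (0:ℝ) ≤ binomR u r - binomR v r)
    have s2 := mul_le_mul_of_nonneg_right hii hposw.le
    nlinarith [s1, s2]
  have hchord : (binomR (w + 1) (r + 1) - binomR w (r + 1)) * (binomR u r - binomR v r) ≤
      (binomR u (r + 1) - binomR v (r + 1)) * (binomR (w + 1) r - binomR w r) :=
    le_of_mul_le_mul_right hchain hposuw
  rw [heq'] at hchord
  have hfin : binomR (w + 1) (r + 1) - binomR w (r + 1) ≤
      binomR u (r + 1) - binomR v (r + 1) :=
    le_of_mul_le_mul_right (by linarith [hchord]) hposw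
  rw [pu, pv, pw]
  rw [pw'] at hfin
  linarith
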